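/- arXiv:1902.10898 — 2 statements merged into one kernel-verified Lean document; each statement's English description precedes it below -/
import Mathlib

section
/- For all integers x ≥ 1 and m ≥ x+2, twice the number of codewords of C(m,x) whose x+2 leftmost bits are all 1 (i.e., codewords starting with 1^{x+2} from the left, Group 5) is N(m−x−1,x). -/
/-- `noForbidden m x c` says the binary word `c = (c_{m-1}, …, c_0)` contains no contiguous
subword of the form `0 1^y 0` or `1 0^y 1` for any `1 ≤ y ≤ x`. -/
def noForbidden (m x : ℕ) (c : Fin m → Bool) : Prop :=
  ∀ j y : ℕ, 1 ≤ y → y ≤ x → (h : j + y + 1 < m) →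
    ¬ ((∀ k, 1 ≤ k → (hk : k ≤ y) → c ⟨j + k, by omega⟩ = ! c ⟨j, by omega⟩) ∧
        c ⟨j + y + 1, h⟩ = c ⟨j, by omega⟩)

/-- `N(m, x)`: the cardinality of the LOCO code `C(m, x)`. -/
noncomputable def locoN (m x : ℕ) : ℕ := Nat.card {c : Fin m → Bool // noForbidden m x c}

/-- `N(k, x)` extended to integer `k` by the convention `N(k, x) = 2` for `k ≤ 1`. -/
noncomputable def Nex (k : ℤ) (x : ℕ) : ℤ := if k ≤ 1 then 2 else (locoN k.toNat x : ℤ)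

/-- Strict lexicographic order on binary words, comparing bits from `c_{m-1}`
(most significant) down to `c_0`, with `0 < 1`. -/
def lexLt (m : ℕ) (d c : Fin m → Bool) : Prop :=
  ∃ i : Fin m, d i = false ∧ c i = true ∧ ∀ j : Fin m, (i : ℕ) < (j : ℕ) → d j = c j

/-- The index `g(m, x, c)` of a codeword: the number of codewords of `C(m, x)` that
precede `c` in lexicographic order. -/
noncomputable def locoIdx (m x : ℕ) (c : Fin m → Bool) : ℕ :=
  Nat.card {d : Fin m → Bool // noForbidden m x d ∧ lexLt m d c}

/- ## Auxiliary material -/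

def restrictF (m n : ℕ) (hnm : n ≤ m) (c : Fin m → Bool) : Fin n → Bool :=
  fun i => c ⟨i, lt_of_lt_of_le i.2 hnm⟩

def extendF (m n : ℕ) (hnm : n ≤ m) (d : Fin n → Bool) : Fin m → Bool :=
  fun i => if h : (i : ℕ) < n then d ⟨i, h⟩ else true

lemma noForbidden_not {m x : ℕ} {c : Fin m → Bool} (h : noForbidden m x c) :
    noForbidden m x (fun i => ! c i) := by
  intro j y hy1 hy2 hlt hc
  exact h j y hy1 hy2 hlt
    ⟨fun k hk1 hk2 => Bool.not_inj (hc.1 k hk1 hk2), Bool.not_inj hc.2⟩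

lemma noForbidden_restrict {m n x : ℕ} (hnm : n ≤ m) {c : Fin m → Bool}
    (h : noForbidden m x c) : noForbidden n x (restrictF m n hnm c) := by
  intro j y hy1 hy2 hlt hc
  exact h j y hy1 hy2 (by omega) ⟨fun k hk1 hk2 => hc.1 k hk1 hk2, hc.2⟩

lemma noForbidden_extend {m n x : ℕ} (hn : 0 < n) (hnm : n ≤ m) {c : Fin m → Bool}
    (htop : ∀ i : Fin m, n - 1 ≤ (i : ℕ) → c i = true)
    (hres : noForbidden n x (restrictF m n hnm c)) :
    noForbidden m x c := by
  intro j y hy1 hy2 hlt hc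
  by_cases hcase : j + y + 1 < n
  · exact hres j y hy1 hy2 hcase ⟨fun k hk1 hk2 => hc.1 k hk1 hk2, hc.2⟩
  · have hj : j < m := by omega
    have hjy : j + y < m := by omega
    have e1 : c ⟨j + y, hjy⟩ = ! c ⟨j, hj⟩ := hc.1 y hy1 le_rfl
    have e2 : c ⟨j + y + 1, hlt⟩ = c ⟨j, hj⟩ := hc.2
    have h1 : c ⟨j + y, hjy⟩ = true := htop ⟨j + y, hjy⟩ (show n - 1 ≤ j + y by omega)
    have h2 : c ⟨j + y + 1, hlt⟩ = true :=
      htop ⟨j + y + 1, hlt⟩ (show n - 1 ≤ j + y + 1 by omega)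
    rw [h1] at e1
    rw [h2] at e2
    rw [← e2] at e1
    simp at e1

lemma restrict_extend (m n : ℕ) (hnm : n ≤ m) (d : Fin n → Bool) :
    restrictF m n hnm (extendF m n hnm d) = d := by
  funext i
  unfold restrictF extendF
  split
  · rfl
  · next h => exact absurd i.isLt h

lemma extend_top (m n : ℕ) (hn : 0 < n) (hnm : n ≤ m) (d : Fin n → Bool)
    (hd : d ⟨n - 1, by omega⟩ = true) :
    ∀ i : Fin m, n - 1 ≤ (i : ℕ) → extendF m n hnm d i = true := by
  intro i hi
  unfold extendF
  split
  · next h =>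
    have he : (⟨(i : ℕ), h⟩ : Fin n) = ⟨n - 1, by omega⟩ := by
      apply Fin.ext
      show (i : ℕ) = n - 1
      omega
    rw [he]
    exact hd
  · rfl

def groupEquiv (n x m : ℕ) (hn : 0 < n) (hnm : n ≤ m) :
    {c : Fin m → Bool // noForbidden m x c ∧ ∀ i : Fin m, n - 1 ≤ (i : ℕ) → c i = true} ≃
    {d : Fin n → Bool // noForbidden n x d ∧ d ⟨n - 1, by omega⟩ = true} where
  toFun c := ⟨restrictF m n hnm c.1,
    noForbidden_restrict hnm c.2.1,
    c.2.2 ⟨n - 1, by omega⟩ (le_refl _)⟩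
  invFun d := ⟨extendF m n hnm d.1,
    noForbidden_extend hn hnm (extend_top m n hn hnm d.1 d.2.2)
      (by rw [restrict_extend]; exact d.2.1),
    extend_top m n hn hnm d.1 d.2.2⟩
  left_inv c := by
    apply Subtype.ext
    funext i
    show extendF m n hnm (restrictF m n hnm c.1) i = c.1 i
    unfold extendF restrictF
    split
    · rfl
    · next h => exact (c.2.2 i (by omega)).symm
  right_inv d := Subtype.ext (restrict_extend m n hnm d.1)

def flipEquiv (n x : ℕ) (hn : 0 < n) :
    {d : Fin n → Bool // noForbidden n x d ∧ d ⟨n - 1, by omega⟩ = true} ≃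
    {d : Fin n → Bool // noForbidden n x d ∧ d ⟨n - 1, by omega⟩ = false} where
  toFun d := ⟨fun i => ! d.1 i, noForbidden_not d.2.1, by
    show (! d.1 ⟨n - 1, Nat.sub_lt hn Nat.one_pos⟩) = false
    rw [d.2.2]
    rfl⟩
  invFun d := ⟨fun i => ! d.1 i, noForbidden_not d.2.1, by
    show (! d.1 ⟨n - 1, Nat.sub_lt hn Nat.one_pos⟩) = true
    rw [d.2.2]
    rfl⟩
  left_inv d := Subtype.ext (by funext i; simp)
  right_inv d := Subtype.ext (by funext i; simp)

def splitEquiv (n x : ℕ) (hn : 0 < n) :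
    {d : Fin n → Bool // noForbidden n x d} ≃
      ({d : Fin n → Bool // noForbidden n x d ∧ d ⟨n - 1, by omega⟩ = true} ⊕
       {d : Fin n → Bool // noForbidden n x d ∧ d ⟨n - 1, by omega⟩ = false}) where
  toFun d := if h : d.1 ⟨n - 1, by omega⟩ = true
    then Sum.inl ⟨d.1, d.2, h⟩
    else Sum.inr ⟨d.1, d.2, Bool.eq_false_iff.mpr h⟩
  invFun s := Sum.elim (fun d => ⟨d.1, d.2.1⟩) (fun d => ⟨d.1, d.2.1⟩) s
  left_inv d := by
    beta_reduce
    split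
    · rfl
    · rfl
  right_inv s := by
    rcases s with d | d <;> simp only [Sum.elim_inl, Sum.elim_inr]
    · by_cases hpos : d.1 ⟨n - 1, by omega⟩ = true
      · exact dif_pos hpos
      · next => exact absurd d.2.2 hpos
    · by_cases hpos : d.1 ⟨n - 1, by omega⟩ = true
      · next => exact absurd (d.2.2.symm.trans hpos) Bool.false_ne_true
      · exact dif_neg hpos

lemma locoN_one (x : ℕ) : locoN 1 x = 2 := by
  have h : ∀ c : Fin 1 → Bool, noForbidden 1 x c :=
    fun c j y hy1 hy2 hlt => absurd hlt (by omega)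
  unfold locoN
  rw [Nat.card_congr (Equiv.subtypeUnivEquiv h),
    Nat.card_congr (Equiv.funUnique (Fin 1) Bool)]
  simp [Nat.card_eq_fintype_card]

/-- For all `x ≥ 1` and `m ≥ x + 2`, twice the number of codewords of
`C(m, x)` whose `x + 2` leftmost bits are all `1` (Group 5) is `N(m - x - 1, x)`. -/
theorem loco_group5_card (m x : ℕ) (hx : 1 ≤ x) (hm : x + 2 ≤ m) :
    2 * (Nat.card {c : Fin m → Bool // noForbidden m x c ∧
          ∀ k, k ≤ x + 1 → c ⟨m - 1 - k, by omega⟩ = true} : ℤ)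
      = Nex ((m : ℤ) - (x : ℤ) - 1) x := by
  obtain ⟨n, hndef⟩ : ∃ n, n = m - x - 1 := ⟨_, rfl⟩
  have hn : 0 < n := by omega
  have hnm : n ≤ m := by omega
  have hm0 : 0 < m := by omega
  have hNex : Nex ((m : ℤ) - (x : ℤ) - 1) x = (locoN n x : ℤ) := by
    unfold Nex
    split_ifs with h
    · have hn1 : n = 1 := by omega
      rw [hn1, locoN_one]
      norm_num
    · have ht : ((m : ℤ) - (x : ℤ) - 1).toNat = n := by omega
      rw [ht]
  have hiff : ∀ c : Fin m → Bool,
      (∀ k, k ≤ x + 1 →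
        c ⟨m - 1 - k, lt_of_le_of_lt (Nat.sub_le _ _) (Nat.sub_lt hm0 Nat.one_pos)⟩ = true) ↔
      (∀ i : Fin m, n - 1 ≤ (i : ℕ) → c i = true) := by
    intro c
    constructor
    · intro hk i hi
      have h2 : (i : ℕ) < m := i.2
      have h1 := hk (m - 1 - (i : ℕ)) (by omega)
      have he : (⟨m - 1 - (m - 1 - (i : ℕ)),
          lt_of_le_of_lt (Nat.sub_le _ _) (Nat.sub_lt hm0 Nat.one_pos)⟩ : Fin m) = i := by
        apply Fin.ext
        show m - 1 - (m - 1 - (i : ℕ)) = (i : ℕ)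
        omega
      rwa [he] at h1
    · intro hi k hk
      exact hi ⟨m - 1 - k, lt_of_le_of_lt (Nat.sub_le _ _) (Nat.sub_lt hm0 Nat.one_pos)⟩
        (show n - 1 ≤ m - 1 - k by omega)
  have e1 : Nat.card {c : Fin m → Bool // noForbidden m x c ∧
        ∀ k, k ≤ x + 1 →
          c ⟨m - 1 - k, lt_of_le_of_lt (Nat.sub_le _ _) (Nat.sub_lt hm0 Nat.one_pos)⟩ = true}
      = Nat.card {d : Fin n → Bool // noForbidden n x d ∧
          d ⟨n - 1, Nat.sub_lt hn Nat.one_pos⟩ = true} :=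
    Nat.card_congr ((Equiv.subtypeEquivRight fun c => and_congr_right fun _ => hiff c).trans
      (groupEquiv n x m hn hnm))
  have e2 : Nat.card {d : Fin n → Bool // noForbidden n x d ∧
        d ⟨n - 1, Nat.sub_lt hn Nat.one_pos⟩ = true}
      = Nat.card {d : Fin n → Bool // noForbidden n x d ∧
        d ⟨n - 1, Nat.sub_lt hn Nat.one_pos⟩ = false} :=
    Nat.card_congr (flipEquiv n x hn)
  have e3 : locoN n x
      = Nat.card {d : Fin n → Bool // noForbidden n x d ∧
          d ⟨n - 1, Nat.sub_lt hn Nat.one_pos⟩ = true}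
      + Nat.card {d : Fin n → Bool // noForbidden n x d ∧
          d ⟨n - 1, Nat.sub_lt hn Nat.one_pos⟩ = false} := by
    unfold locoN
    rw [Nat.card_congr (splitEquiv n x hn), Nat.card_sum]
  rw [hNex]
  show 2 * (Nat.card {c : Fin m → Bool // noForbidden m x c ∧
        ∀ k, k ≤ x + 1 →
          c ⟨m - 1 - k, lt_of_le_of_lt (Nat.sub_le _ _) (Nat.sub_lt hm0 Nat.one_pos)⟩ = true} : ℤ)
      = (locoN n x : ℤ)
  rw [e1, e3, ← e2]
  push_cast
  ring
end

section
/- For all integers x ≥ 1 and m ≥ x+1, if c′ ∈ C(m+1,x) starts, from the left, with 0 followed by x+1 ones (Group 2), and c denotes the binary word formed by the m rightmost bits of c′, then c ∈ C(m,x) and 2·(g(m,x,c) − g(m+1,x,c′)) = N(m,x) − N(m−x,x); that is, the shift in codeword indices for Group 2 is ζ₂ = −(1/2)(N(m,x) − N(m−x,x)). -/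
lemma nf_restrict {n k x : ℕ} (hk : k ≤ n) {d : Fin n → Bool} (h : noForbidden n x d) :
    noForbidden k x (fun i : Fin k => d ⟨i, lt_of_lt_of_le i.2 hk⟩) := by
  intro j y hy1 hy2 hlt hP
  exact h j y hy1 hy2 (by omega) ⟨fun kk hk1 hk2 => hP.1 kk hk1 hk2, hP.2⟩

def badHead (m x : ℕ) (d : Fin m → Bool) : Prop :=
  ∃ y, 1 ≤ y ∧ y ≤ x ∧ ∃ _h : y < m,
    d ⟨m - 1 - y, by omega⟩ = false ∧ ∀ k, k < y → d ⟨m - 1 - k, by omega⟩ = true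

lemma fin_mk_eq {n a b : ℕ} (ha : a < n) (hb : b < n) (h : a = b) :
    (⟨a, ha⟩ : Fin n) = ⟨b, hb⟩ := by subst h; rfl

lemma snoc_mk_lt {n : ℕ} (d : Fin n → Bool) (b : Bool) {i : ℕ} (h : i < n) (h' : i < n + 1) :
    (Fin.snoc d b : Fin (n+1) → Bool) ⟨i, h'⟩ = d ⟨i, h⟩ := by
  have he : (⟨i, h'⟩ : Fin (n+1)) = Fin.castSucc ⟨i, h⟩ := rfl
  rw [he, Fin.snoc_castSucc]

lemma snoc_mk_last {n : ℕ} (d : Fin n → Bool) (b : Bool) (h : n < n + 1) :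
    (Fin.snoc d b : Fin (n+1) → Bool) ⟨n, h⟩ = b := by
  have he : (⟨n, h⟩ : Fin (n+1)) = Fin.last n := rfl
  rw [he, Fin.snoc_last]

lemma nf_snoc_false_iff (m x : ℕ) (hx : 1 ≤ x) (hm : x + 1 ≤ m) (d : Fin m → Bool) :
    noForbidden (m+1) x (Fin.snoc d false) ↔ noForbidden m x d ∧ ¬ badHead m x d := by
  constructor
  · intro h
    refine ⟨?_, ?_⟩
    · have h2 := nf_restrict (Nat.le_succ m) (x := x) h
      have he : (fun i : Fin m =>
          (Fin.snoc d false : Fin (m+1) → Bool) ⟨i.1, lt_of_lt_of_le i.2 (Nat.le_succ m)⟩) = d := by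
        funext i
        rw [snoc_mk_lt d false i.2]
      rwa [he] at h2
    · rintro ⟨y, hy1, hy2, hym, hfalse, hones⟩
      apply h (m - 1 - y) y hy1 hy2 (by omega)
      constructor
      · intro k hk1 hk2
        rw [snoc_mk_lt d false (show m - 1 - y + k < m by omega),
            snoc_mk_lt d false (show m - 1 - y < m by omega)]
        rw [show (⟨m - 1 - y + k, by omega⟩ : Fin m) = ⟨m - 1 - (y - k), by omega⟩ from
          fin_mk_eq _ _ (by omega)]
        rw [hones (y - k) (by omega), hfalse]
        rfl
      · rw [show (⟨m - 1 - y + y + 1, by omega⟩ : Fin (m+1)) = ⟨m, by omega⟩ from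
          fin_mk_eq _ _ (by omega)]
        rw [snoc_mk_last, snoc_mk_lt d false (show m - 1 - y < m by omega), hfalse]
  · rintro ⟨hnf, hbad⟩ j y hy1 hy2 hlt ⟨hpat, hend⟩
    by_cases hcase : j + y + 1 < m
    · apply hnf j y hy1 hy2 hcase
      constructor
      · intro k hk1 hk2
        have hp := hpat k hk1 hk2
        rwa [snoc_mk_lt d false (show j + k < m by omega),
             snoc_mk_lt d false (show j < m by omega)] at hp
      · have hp := hend
        rwa [snoc_mk_lt d false (show j + y + 1 < m from hcase),
             snoc_mk_lt d false (show j < m by omega)] at hp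
    · have hjm : j + y + 1 = m := by omega
      have hj0 : d ⟨j, by omega⟩ = false := by
        have he := hend
        rw [show (⟨j + y + 1, hlt⟩ : Fin (m+1)) = ⟨m, by omega⟩ from fin_mk_eq _ _ (by omega),
            snoc_mk_last, snoc_mk_lt d false (show j < m by omega)] at he
        exact he.symm
      apply hbad
      refine ⟨y, hy1, hy2, by omega, ?_, ?_⟩
      · rw [show (⟨m - 1 - y, by omega⟩ : Fin m) = ⟨j, by omega⟩ from fin_mk_eq _ _ (by omega)]
        exact hj0
      · intro k hk
        have hp := hpat (y - k) (by omega) (by omega)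
        rw [snoc_mk_lt d false (show j + (y - k) < m by omega),
            snoc_mk_lt d false (show j < m by omega), hj0] at hp
        rw [show (⟨m - 1 - k, by omega⟩ : Fin m) = ⟨j + (y - k), by omega⟩ from
          fin_mk_eq _ _ (by omega)]
        exact hp

def onesHead (m x : ℕ) (d : Fin m → Bool) : Prop :=
  ∀ k, k ≤ x → ∀ h : m - 1 - k < m, d ⟨m - 1 - k, h⟩ = true

lemma lex_top_false {m : ℕ} (c' d' : Fin (m+1) → Bool) (h0 : c' ⟨m, by omega⟩ = false)
    (h : lexLt (m+1) d' c') : d' ⟨m, by omega⟩ = false := by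
  obtain ⟨i, hdi, hci, hag⟩ := h
  rcases Nat.lt_succ_iff_lt_or_eq.mp i.2 with him | him
  · have := hag ⟨m, by omega⟩ him
    rw [this, h0]
  · exfalso
    rw [show i = ⟨m, by omega⟩ from Fin.ext him, h0] at hci
    exact Bool.false_ne_true hci

lemma lex_snoc {m : ℕ} (c' : Fin (m+1) → Bool) (h0 : c' ⟨m, by omega⟩ = false)
    (d : Fin m → Bool) :
    lexLt (m+1) (Fin.snoc d false) c' ↔ lexLt m d (fun i => c' (Fin.castSucc i)) := by
  constructor
  · rintro ⟨i, hdi, hci, hag⟩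
    have him : (i : ℕ) < m := by
      rcases Nat.lt_succ_iff_lt_or_eq.mp i.2 with h | h
      · exact h
      · exfalso
        rw [show i = ⟨m, by omega⟩ from Fin.ext h, h0] at hci
        exact Bool.false_ne_true hci
    refine ⟨⟨i, him⟩, ?_, ?_, ?_⟩
    · rw [← snoc_mk_lt d false him i.2]
      exact hdi
    · show c' (Fin.castSucc ⟨i, him⟩) = true
      rw [show Fin.castSucc ⟨(i : ℕ), him⟩ = i from Fin.ext rfl]
      exact hci
    · intro j hj
      have := hag (Fin.castSucc j) hj
      rwa [Fin.snoc_castSucc] at this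
  · rintro ⟨i, hdi, hci, hag⟩
    refine ⟨Fin.castSucc i, ?_, hci, ?_⟩
    · rw [Fin.snoc_castSucc]; exact hdi
    · intro j hj
      rcases Nat.lt_succ_iff_lt_or_eq.mp j.2 with hjm | hjm
      · have := hag ⟨j, hjm⟩ hj
        rw [show j = Fin.castSucc ⟨(j : ℕ), hjm⟩ from Fin.ext rfl, Fin.snoc_castSucc]
        exact this
      · rw [show j = ⟨m, by omega⟩ from Fin.ext hjm, h0, snoc_mk_last]

lemma bad_lex {m x : ℕ} (hm : x + 1 ≤ m) {c d : Fin m → Bool}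
    (hc : onesHead m x c) (hb : badHead m x d) : lexLt m d c := by
  obtain ⟨y, hy1, hy2, hym, hfalse, hones⟩ := hb
  refine ⟨⟨m - 1 - y, by omega⟩, hfalse, hc y hy2 (by omega), ?_⟩
  intro j hj
  obtain ⟨jv, hjv⟩ := j
  simp only at hj
  have h1 := hones (m - 1 - jv) (by omega)
  have h2 := hc (m - 1 - jv) (by omega) (by omega)
  rw [show (⟨m - 1 - (m - 1 - jv), by omega⟩ : Fin m) = ⟨jv, hjv⟩ from
    fin_mk_eq _ _ (by omega)] at h1 h2
  rw [h1, h2]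

lemma bad_iff {m x : ℕ} (hm : x + 1 ≤ m) (d : Fin m → Bool) :
    badHead m x d ↔ (d ⟨m - 1, by omega⟩ = true ∧ ¬ onesHead m x d) := by
  constructor
  · rintro ⟨y, hy1, hy2, hym, hfalse, hones⟩
    constructor
    · have := hones 0 hy1
      rwa [show (⟨m - 1 - 0, by omega⟩ : Fin m) = ⟨m - 1, by omega⟩ from
        fin_mk_eq _ _ (by omega)] at this
    · intro ho
      have := ho y hy2 (by omega)
      exact Bool.false_ne_true (hfalse.symm.trans this)
  · rintro ⟨htop, hno⟩
    have hex : ∃ k, d ⟨m - 1 - k, by omega⟩ = false ∧ k ≤ x := by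
      by_contra hno2
      push_neg at hno2
      apply hno
      intro k hk h
      cases hdk : d ⟨m - 1 - k, h⟩
      · exact absurd (hno2 k hdk) (by omega)
      · rfl
    classical
    have hy1 : 1 ≤ Nat.find hex := by
      rcases Nat.eq_zero_or_pos (Nat.find hex) with h | h
      · exfalso
        have hf := (Nat.find_spec hex).1
        rw [h] at hf
        rw [show (⟨m - 1 - 0, by omega⟩ : Fin m) = ⟨m - 1, by omega⟩ from
          fin_mk_eq _ _ (by omega)] at hf
        exact absurd (htop.symm.trans hf) (by simp)
      · exact h
    refine ⟨Nat.find hex, hy1, (Nat.find_spec hex).2, by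
        have := (Nat.find_spec hex).2; omega, (Nat.find_spec hex).1, ?_⟩
    intro k hk
    have hmin := Nat.find_min hex hk
    cases hdk : d ⟨m - 1 - k, by omega⟩
    · exact absurd ⟨hdk, by have := (Nat.find_spec hex).2; omega⟩ hmin
    · rfl

open Classical in
lemma card_split {α : Type*} [Finite α] (p q : α → Prop) :
    Nat.card {a // p a} = Nat.card {a // p a ∧ q a} + Nat.card {a // p a ∧ ¬ q a} := by
  rw [← Nat.card_sum]
  apply Nat.card_congr
  exact {
    toFun := fun a => if h : q a.1 then .inl ⟨a.1, a.2, h⟩ else .inr ⟨a.1, a.2, h⟩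
    invFun := Sum.elim (fun z => ⟨z.1, z.2.1⟩) (fun z => ⟨z.1, z.2.1⟩)
    left_inv := fun a => by by_cases h : q a.1 <;> simp [h]
    right_inv := by rintro (⟨a, ha, hq⟩|⟨a, ha, hq⟩) <;> simp [hq] }

lemma nf_compl {m x : ℕ} {d : Fin m → Bool} (h : noForbidden m x d) :
    noForbidden m x (fun i => ! d i) := by
  intro j y hy1 hy2 hlt hP
  apply h j y hy1 hy2 hlt
  constructor
  · intro k hk1 hk2
    have hp := hP.1 k hk1 hk2
    simp only [Bool.not_not] at hp
    cases hdj : d ⟨j, by omega⟩ <;> rw [hdj] at hp <;> simp at hp <;> simp [hp]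
  · have hp := hP.2
    simp only at hp
    exact Bool.not_inj hp

lemma locoN_half (n x : ℕ) (hn : 1 ≤ n) :
    locoN n x = 2 * Nat.card {d : Fin n → Bool //
      noForbidden n x d ∧ d ⟨n - 1, by omega⟩ = true} := by
  rw [locoN, card_split (fun d => noForbidden n x d) (fun d => d ⟨n - 1, by omega⟩ = true)]
  have he : Nat.card {d : Fin n → Bool // noForbidden n x d ∧ ¬ d ⟨n - 1, by omega⟩ = true}
      = Nat.card {d : Fin n → Bool // noForbidden n x d ∧ d ⟨n - 1, by omega⟩ = true} := by
    apply Nat.card_congr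
    exact {
      toFun := fun z => ⟨fun i => ! z.1 i, nf_compl z.2.1, by
        have := z.2.2
        simp only [Bool.not_eq_true] at this
        simp [this]⟩
      invFun := fun z => ⟨fun i => ! z.1 i, nf_compl z.2.1, by simp [z.2.2]⟩
      left_inv := fun z => by
        apply Subtype.ext; funext i; simp
      right_inv := fun z => by
        apply Subtype.ext; funext i; simp }
  rw [he, two_mul]

def pad (m n : ℕ) (e : Fin n → Bool) : Fin m → Bool :=
  fun i => if h : (i : ℕ) < n then e ⟨i, h⟩ else true

lemma pad_lt {m n : ℕ} (e : Fin n → Bool) {v : ℕ} (h' : v < m) (h : v < n) :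
    pad m n e ⟨v, h'⟩ = e ⟨v, h⟩ := dif_pos h

lemma pad_ge {m n : ℕ} (e : Fin n → Bool) {v : ℕ} (h' : v < m) (h : ¬ v < n) :
    pad m n e ⟨v, h'⟩ = true := dif_neg h

lemma pad_nf {m x : ℕ} (hx : 1 ≤ x) (hm : x + 1 ≤ m) (e : Fin (m - x) → Bool)
    (he : e ⟨m - x - 1, by omega⟩ = true) (hnf : noForbidden (m - x) x e) :
    noForbidden m x (pad m (m - x) e) := by
  intro j y hy1 hy2 hlt hP
  obtain ⟨hpat, hend⟩ := hP
  have hj : j < m - x := by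
    by_contra hj
    have h1 := hpat 1 le_rfl hy1
    rw [pad_ge e (by omega) (by omega), pad_ge e (by omega) hj] at h1
    simp at h1
  cases hbj : e ⟨j, hj⟩ with
  | false =>
    have hjend : j + y + 1 < m - x := by
      by_contra hc
      have h1 := hend
      rw [pad_ge e (by omega) hc, pad_lt e (by omega) hj, hbj] at h1
      simp at h1
    apply hnf j y hy1 hy2 hjend
    constructor
    · intro k hk1 hk2
      have h1 := hpat k hk1 hk2
      rwa [pad_lt e (by omega) (by omega), pad_lt e (by omega) hj] at h1
    · have h1 := hend
      rwa [pad_lt e (by omega) hjend, pad_lt e (by omega) hj] at h1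
  | true =>
    have hky : ∀ k, 1 ≤ k → k ≤ y → j + k < m - x := by
      intro k hk1 hk2
      by_contra hc
      have h1 := hpat k hk1 hk2
      rw [pad_ge e (by omega) hc, pad_lt e (by omega) hj, hbj] at h1
      simp at h1
    have hjy : j + y < m - x := hky y hy1 le_rfl
    by_cases hjend : j + y + 1 < m - x
    · apply hnf j y hy1 hy2 hjend
      constructor
      · intro k hk1 hk2
        have h1 := hpat k hk1 hk2
        rwa [pad_lt e (by omega) (by omega), pad_lt e (by omega) hj] at h1
      · have h1 := hend
        rwa [pad_lt e (by omega) hjend, pad_lt e (by omega) hj] at h1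
    · have h1 := hpat y hy1 le_rfl
      rw [pad_lt e (by omega) hjy, pad_lt e (by omega) hj, hbj] at h1
      rw [show (⟨j + y, hjy⟩ : Fin (m - x)) = ⟨m - x - 1, by omega⟩ from
        fin_mk_eq _ _ (by omega), he] at h1
      simp at h1

lemma pad_ones {m x : ℕ} (hx : 1 ≤ x) (hm : x + 1 ≤ m) (e : Fin (m - x) → Bool)
    (he : e ⟨m - x - 1, by omega⟩ = true) : onesHead m x (pad m (m - x) e) := by
  intro k hk h
  by_cases hc : m - 1 - k < m - x
  · rw [pad_lt e h hc, show (⟨m - 1 - k, hc⟩ : Fin (m - x)) = ⟨m - x - 1, by omega⟩ from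
      fin_mk_eq _ _ (by omega)]
    exact he
  · exact pad_ge e h hc

lemma card_ones (m x : ℕ) (hx : 1 ≤ x) (hm : x + 1 ≤ m) :
    Nat.card {d : Fin m → Bool // noForbidden m x d ∧ onesHead m x d}
      = Nat.card {e : Fin (m - x) → Bool //
          noForbidden (m - x) x e ∧ e ⟨m - x - 1, by omega⟩ = true} := by
  apply Nat.card_congr
  exact {
    toFun := fun z => ⟨fun i => z.1 ⟨i.1, by omega⟩, nf_restrict (by omega) z.2.1, by
      have := z.2.2 x le_rfl (by omega)
      rwa [show (⟨m - 1 - x, by omega⟩ : Fin m) = ⟨m - x - 1, by omega⟩ from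
        fin_mk_eq _ _ (by omega)] at this⟩
    invFun := fun z => ⟨pad m (m - x) z.1, pad_nf hx hm z.1 z.2.2 z.2.1,
      pad_ones hx hm z.1 z.2.2⟩
    left_inv := fun z => by
      apply Subtype.ext
      funext i
      obtain ⟨iv, hiv⟩ := i
      by_cases hc : iv < m - x
      · exact pad_lt _ hiv hc
      · show pad m (m - x) (fun i => z.1 ⟨i.1, by omega⟩) ⟨iv, hiv⟩ = z.1 ⟨iv, hiv⟩
        rw [pad_ge _ hiv hc]
        have := z.2.2 (m - 1 - iv) (by omega) (by omega)
        rw [show (⟨m - 1 - (m - 1 - iv), by omega⟩ : Fin m) = ⟨iv, hiv⟩ from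
          fin_mk_eq _ _ (by omega)] at this
        exact this.symm
    right_inv := fun z => by
      apply Subtype.ext
      funext i
      obtain ⟨iv, hiv⟩ := i
      exact pad_lt _ (by omega) hiv }

/-- For all `x ≥ 1` and `m ≥ x + 1`, if `c' ∈ C(m + 1, x)` starts from the
left with `0` followed by `x + 1` ones (Group 2), and `c` is the word formed by the `m`
rightmost bits of `c'`, then `c ∈ C(m, x)` and
`2 (g(m, x, c) - g(m + 1, x, c')) = N(m, x) - N(m - x, x)`, i.e. the index shift is
`ζ₂ = -(1/2)(N(m, x) - N(m - x, x))`. -/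
theorem loco_group2_shift (m x : ℕ) (hx : 1 ≤ x) (hm : x + 1 ≤ m)
    (c' : Fin (m + 1) → Bool) (hc' : noForbidden (m + 1) x c')
    (h0 : c' ⟨m, by omega⟩ = false)
    (h1 : ∀ k, 1 ≤ k → k ≤ x + 1 → c' ⟨m - k, by omega⟩ = true) :
    noForbidden m x (fun i => c' (Fin.castSucc i)) ∧
    2 * ((locoIdx m x (fun i => c' (Fin.castSucc i)) : ℤ) - (locoIdx (m + 1) x c' : ℤ))
      = Nex (m : ℤ) x - Nex ((m : ℤ) - (x : ℤ)) x := by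
  classical
  set c : Fin m → Bool := fun i => c' (Fin.castSucc i) with hc
  have hcnf : noForbidden m x c := nf_restrict (Nat.le_succ m) hc'
  have hcones : onesHead m x c := by
    intro k hk h
    have := h1 (k + 1) (by omega) (by omega)
    show c' (Fin.castSucc ⟨m - 1 - k, h⟩) = true
    rwa [show Fin.castSucc ⟨m - 1 - k, h⟩ = ⟨m - (k + 1), by omega⟩ from
      Fin.ext (by simp; omega)]
  refine ⟨hcnf, ?_⟩
  have hNm : Nex (m : ℤ) x = (locoN m x : ℤ) := by
    rw [Nex, if_neg (by push_cast; omega)]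
    rw [Int.toNat_natCast]
  have hNmx : Nex ((m : ℤ) - (x : ℤ)) x = (locoN (m - x) x : ℤ) := by
    by_cases h : (m : ℤ) - (x : ℤ) ≤ 1
    · rw [Nex, if_pos h, show m - x = 1 by omega, locoN_one]
      norm_num
    · rw [Nex, if_neg h]
      rw [show ((m : ℤ) - (x : ℤ)).toNat = m - x by omega]
  have em1 : m - 1 < m := by omega
  have em2 : m - 1 - 0 < m := by omega
  have em3 : m - 1 - 0 = m - 1 := by omega
  have em4 : 1 ≤ m := by omega
  have em5 : 1 ≤ m - x := by omega
  -- index of c' equals the count of "good-head" words below c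
  have hB : locoIdx (m + 1) x c'
      = Nat.card {d : Fin m → Bool //
          (noForbidden m x d ∧ ¬ badHead m x d) ∧ lexLt m d c} := by
    rw [locoIdx]
    have key : ∀ d' : Fin (m+1) → Bool, (noForbidden (m+1) x d' ∧ lexLt (m+1) d' c') →
        ((noForbidden m x (fun i => d' (Fin.castSucc i))
            ∧ ¬ badHead m x (fun i => d' (Fin.castSucc i)))
          ∧ lexLt m (fun i => d' (Fin.castSucc i)) c) := by
      rintro d' ⟨hnf, hlex⟩
      have h00 : d' ⟨m, by omega⟩ = false := lex_top_false c' d' h0 hlex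
      have hsn : Fin.snoc (fun i => d' (Fin.castSucc i)) false = d' := by
        funext i
        induction i using Fin.lastCases with
        | last => rw [Fin.snoc_last]; exact h00.symm
        | cast i => rw [Fin.snoc_castSucc]
      exact ⟨(nf_snoc_false_iff m x hx hm _).mp (by rwa [hsn]),
        (lex_snoc c' h0 _).mp (by rwa [hsn])⟩
    have key2 : ∀ d : Fin m → Bool, ((noForbidden m x d ∧ ¬ badHead m x d) ∧ lexLt m d c) →
        (noForbidden (m+1) x (Fin.snoc d false) ∧ lexLt (m+1) (Fin.snoc d false) c') := by
      rintro d ⟨⟨ha, hb⟩, hl⟩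
      exact ⟨(nf_snoc_false_iff m x hx hm d).mpr ⟨ha, hb⟩, (lex_snoc c' h0 d).mpr hl⟩
    apply Nat.card_congr
    exact {
      toFun := fun z => ⟨fun i => z.1 (Fin.castSucc i), key z.1 z.2⟩
      invFun := fun z => ⟨Fin.snoc z.1 false, key2 z.1 z.2⟩
      left_inv := fun z => by
        apply Subtype.ext
        funext i
        induction i using Fin.lastCases with
        | last =>
          show (Fin.snoc _ false : Fin (m+1) → Bool) (Fin.last m) = z.1 (Fin.last m)
          rw [Fin.snoc_last]
          exact (lex_top_false c' z.1 h0 z.2.2).symm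
        | cast i =>
          show (Fin.snoc _ false : Fin (m+1) → Bool) (Fin.castSucc i) = z.1 (Fin.castSucc i)
          rw [Fin.snoc_castSucc]
      right_inv := fun z => by
        apply Subtype.ext
        funext i
        show (Fin.snoc z.1 false : Fin (m+1) → Bool) (Fin.castSucc i) = z.1 i
        rw [Fin.snoc_castSucc] }
  have hA : locoIdx m x c
      = Nat.card {d : Fin m → Bool // (noForbidden m x d ∧ lexLt m d c) ∧ badHead m x d}
        + Nat.card {d : Fin m → Bool //
            (noForbidden m x d ∧ lexLt m d c) ∧ ¬ badHead m x d} := by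
    rw [locoIdx]
    exact card_split _ _
  have hA2 : Nat.card {d : Fin m → Bool // (noForbidden m x d ∧ lexLt m d c) ∧ ¬ badHead m x d}
      = Nat.card {d : Fin m → Bool // (noForbidden m x d ∧ ¬ badHead m x d) ∧ lexLt m d c} :=
    Nat.card_congr (Equiv.subtypeEquivRight (fun d => by tauto))
  have hA1 : Nat.card {d : Fin m → Bool // (noForbidden m x d ∧ lexLt m d c) ∧ badHead m x d}
      = Nat.card {d : Fin m → Bool // noForbidden m x d ∧ badHead m x d} :=
    Nat.card_congr (Equiv.subtypeEquivRight (fun d => by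
      constructor
      · rintro ⟨⟨hnf, _⟩, hb⟩; exact ⟨hnf, hb⟩
      · rintro ⟨hnf, hb⟩; exact ⟨⟨hnf, bad_lex hm hcones hb⟩, hb⟩))
  have keyg : locoIdx m x c
      = Nat.card {d : Fin m → Bool // noForbidden m x d ∧ badHead m x d}
        + locoIdx (m + 1) x c' := by
    rw [hA, hA1, hA2, hB]
  -- counting identity
  have hsplitT : Nat.card {d : Fin m → Bool //
        noForbidden m x d ∧ d ⟨m - 1, em1⟩ = true}
      = Nat.card {d : Fin m → Bool //
          (noForbidden m x d ∧ d ⟨m - 1, em1⟩ = true) ∧ onesHead m x d}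
        + Nat.card {d : Fin m → Bool //
          (noForbidden m x d ∧ d ⟨m - 1, em1⟩ = true) ∧ ¬ onesHead m x d} :=
    card_split _ _
  have hones_eq : Nat.card {d : Fin m → Bool //
        (noForbidden m x d ∧ d ⟨m - 1, em1⟩ = true) ∧ onesHead m x d}
      = Nat.card {d : Fin m → Bool // noForbidden m x d ∧ onesHead m x d} :=
    Nat.card_congr (Equiv.subtypeEquivRight (fun d => by
      constructor
      · rintro ⟨⟨hnf, _⟩, ho⟩; exact ⟨hnf, ho⟩
      · rintro ⟨hnf, ho⟩
        refine ⟨⟨hnf, ?_⟩, ho⟩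
        have := ho 0 (Nat.zero_le x) em2
        rwa [show (⟨m - 1 - 0, em2⟩ : Fin m) = ⟨m - 1, em1⟩ from
          fin_mk_eq _ _ em3] at this))
  have hbad_eq : Nat.card {d : Fin m → Bool //
        (noForbidden m x d ∧ d ⟨m - 1, em1⟩ = true) ∧ ¬ onesHead m x d}
      = Nat.card {d : Fin m → Bool // noForbidden m x d ∧ badHead m x d} :=
    Nat.card_congr (Equiv.subtypeEquivRight (fun d => by
      rw [bad_iff hm d]
      tauto))
  have keyN : locoN m x = locoN (m - x) x
      + 2 * Nat.card {d : Fin m → Bool // noForbidden m x d ∧ badHead m x d} := by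
    rw [locoN_half m x em4, hsplitT, hones_eq, hbad_eq, card_ones m x hx hm,
      locoN_half (m - x) x em5]
    ring
  rw [hNm, hNmx, keyg, keyN]
  push_cast
  ring
end
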